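/- arXiv:1608.08803 — 6 statements merged into one kernel-verified Lean document; each statement's English description precedes it below -/
import Mathlib

section
/- Let λ ∈ ℂ with |λ| = 1 and λ not a root of unity, and let a₁(z) = Σ_{n≥1} a_{1,n} z^n be a holomorphic function on D(0,ρ) with a₁(0) = 0. Suppose λ is Brjuno. Then there exists ρ₁ > 0 and a holomorphic function ψ on D(0,ρ₁) with ψ(0) = 0 satisfying the functional equation ψ(z)(1 + a₁(z)) − ψ(λz) + a₁(z) = 0 for all z ∈ D(0,ρ₁). -/
open Metric Set Filter
open scoped ENNReal NNReal


/-- `ω(m) = min_{2 ≤ k ≤ m} |λ^k - λ|`. -/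
noncomputable def brjunoOmega (l : ℂ) (m : ℕ) : ℝ :=
  sInf ((fun k : ℕ => ‖l ^ k - l‖) '' Set.Icc 2 m)

/-- `λ` is a Brjuno number: `∑_{k≥0} 2^{-k} log(1/ω(2^{k+1})) < ∞`. -/
def IsBrjuno (l : ℂ) : Prop :=
  Summable fun k : ℕ => (1 / 2 ^ k : ℝ) * Real.log (1 / brjunoOmega l (2 ^ (k + 1)))

lemma omega_bdd (l : ℂ) (m : ℕ) :
    BddBelow ((fun k : ℕ => ‖l ^ k - l‖) '' Set.Icc 2 m) :=
  ⟨0, by rintro x ⟨k, -, rfl⟩; positivity⟩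

lemma omega_le (l : ℂ) {k m : ℕ} (h2 : 2 ≤ k) (hkm : k ≤ m) :
    brjunoOmega l m ≤ ‖l ^ k - l‖ :=
  csInf_le (omega_bdd l m) ⟨k, ⟨h2, hkm⟩, rfl⟩

lemma omega_pos {l : ℂ} (hl0 : l ≠ 0) (hroot : ∀ n : ℕ, 1 ≤ n → l ^ n ≠ 1)
    {m : ℕ} (hm : 2 ≤ m) : 0 < brjunoOmega l m := by
  have hne : ((fun k : ℕ => ‖l ^ k - l‖) '' Set.Icc 2 m).Nonempty :=
    ⟨_, ⟨2, ⟨le_refl 2, hm⟩, rfl⟩⟩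
  have hfin : ((fun k : ℕ => ‖l ^ k - l‖) '' Set.Icc 2 m).Finite :=
    (Set.finite_Icc _ _).image _
  obtain ⟨k, ⟨hk2, -⟩, hk⟩ := hne.csInf_mem hfin
  rw [brjunoOmega, ← hk]
  have : l ^ k - l ≠ 0 := by
    intro h
    apply hroot (k - 1) (by omega)
    apply mul_right_cancel₀ hl0
    rw [one_mul, ← pow_succ, Nat.sub_add_cancel (by omega)]
    exact sub_eq_zero.mp h
  simpa using this

lemma small_divisor {l : ℂ} (hl0 : l ≠ 0) (habs : ‖l‖ = 1)
    (hroot : ∀ n : ℕ, 1 ≤ n → l ^ n ≠ 1) (hB : IsBrjuno l) :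
    ∃ N : ℕ, 1 ≤ N ∧ ∀ p : ℕ, N ≤ p → Real.exp (-(p : ℝ)) ≤ ‖l ^ p - 1‖ := by
  have htend := hB.tendsto_atTop_zero
  have hev : ∀ᶠ k in atTop,
      (1 / 2 ^ k : ℝ) * Real.log (1 / brjunoOmega l (2 ^ (k + 1))) < 1 :=
    htend.eventually_lt_const one_pos
  obtain ⟨K, hK⟩ := eventually_atTop.mp hev
  refine ⟨2 ^ K, Nat.one_le_two_pow, fun p hp => ?_⟩
  have hp1 : 1 ≤ p := le_trans Nat.one_le_two_pow hp
  set k := Nat.log 2 p with hkdef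
  have h1 : 2 ^ k ≤ p := Nat.pow_log_le_self 2 (by omega)
  have h2 : p < 2 ^ (k + 1) := Nat.lt_pow_succ_log_self (by norm_num) p
  have hkK : K ≤ k := by
    have h3 : 2 ^ K < 2 ^ (k + 1) := lt_of_le_of_lt hp h2
    have := (Nat.pow_lt_pow_iff_right (by norm_num : 1 < 2)).mp h3
    omega
  have h2m : 2 ≤ 2 ^ (k + 1) := by
    calc 2 = 2 ^ 1 := (pow_one 2).symm
    _ ≤ 2 ^ (k + 1) := Nat.pow_le_pow_right (by norm_num) (by omega)
  have hω : 0 < brjunoOmega l (2 ^ (k + 1)) := omega_pos hl0 hroot h2m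
  have hlog : Real.log (1 / brjunoOmega l (2 ^ (k + 1))) ≤ (p : ℝ) := by
    have hKk := le_of_lt (hK k hkK)
    have h2k : (0:ℝ) < 2 ^ k := by positivity
    rw [div_mul_eq_mul_div, one_mul, div_le_one h2k] at hKk
    calc Real.log (1 / brjunoOmega l (2 ^ (k + 1))) ≤ (2:ℝ) ^ k := hKk
    _ ≤ (p : ℝ) := by exact_mod_cast (by exact_mod_cast h1 : ((2:ℕ) ^ k : ℝ) ≤ (p:ℝ))
  have hωexp : Real.exp (-(p : ℝ)) ≤ brjunoOmega l (2 ^ (k + 1)) := by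
    have h4 := (Real.log_le_iff_le_exp (by positivity)).mp hlog
    rw [one_div] at h4
    rw [Real.exp_neg, inv_le_comm₀ (Real.exp_pos _) hω]
    exact h4
  refine le_trans hωexp ?_
  have h5 := omega_le l (k := p + 1) (m := 2 ^ (k + 1)) (by omega) (by omega)
  calc brjunoOmega l (2 ^ (k + 1)) ≤ ‖l ^ (p + 1) - l‖ := h5
  _ = ‖l ^ p - 1‖ := by
      rw [pow_succ']
      calc ‖l * l ^ p - l‖ = ‖l * (l ^ p - 1)‖ := by ring_nf
      _ = ‖l‖ * ‖l ^ p - 1‖ := norm_mul _ _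
      _ = ‖l ^ p - 1‖ := by rw [habs, one_mul]

/-- if `λ` is Brjuno, `|λ| = 1`, `λ` not a root of unity, and `a₁` is
holomorphic on `D(0,ρ)` with `a₁(0) = 0`, then there are `ρ₁ > 0` and `ψ` holomorphic
on `D(0,ρ₁)` with `ψ(0) = 0` solving `ψ(z)(1 + a₁(z)) − ψ(λz) + a₁(z) = 0`. -/
theorem cohomological_equation_linear_term
    (l : ℂ) (habs : ‖l‖ = 1) (hroot : ∀ n : ℕ, 1 ≤ n → l ^ n ≠ 1)
    (hB : IsBrjuno l) (ρ : ℝ) (hρ : 0 < ρ) (a₁ : ℂ → ℂ)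
    (ha : DifferentiableOn ℂ a₁ (Metric.ball 0 ρ)) (ha0 : a₁ 0 = 0) :
    ∃ ρ₁ > 0, ∃ ψ : ℂ → ℂ, DifferentiableOn ℂ ψ (Metric.ball 0 ρ₁) ∧ ψ 0 = 0 ∧
      ∀ z ∈ Metric.ball (0 : ℂ) ρ₁, ψ z * (1 + a₁ z) - ψ (l * z) + a₁ z = 0 := by
  have hl0 : l ≠ 0 := by
    intro h; rw [h] at habs; simp at habs
  -- choose a small radius r₀ where |a₁| < 1/2
  have hcont : ContinuousAt a₁ 0 :=
    ha.continuousOn.continuousAt (Metric.ball_mem_nhds 0 hρ)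
  obtain ⟨δ, hδpos, hδ⟩ := Metric.continuousAt_iff.mp hcont (1/2) (by norm_num)
  set r₀ : ℝ := min (δ/2) (ρ/2) with hr₀def
  have hr₀pos : 0 < r₀ := lt_min (by linarith) (by linarith)
  have hr₀δ : r₀ ≤ δ/2 := min_le_left _ _
  have hr₀ρ : r₀ ≤ ρ/2 := min_le_right _ _
  have hsub : closedBall (0:ℂ) r₀ ⊆ ball 0 ρ := fun z hz => by
    rw [mem_closedBall] at hz; rw [mem_ball]; linarith
  have hsmall : ∀ z ∈ closedBall (0:ℂ) r₀, ‖a₁ z‖ < 1/2 := by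
    intro z hz
    rw [mem_closedBall] at hz
    have hd : dist z 0 < δ := by linarith
    have := hδ hd
    rw [ha0, dist_zero_right] at this
    exact this
  set g : ℂ → ℂ := fun z => Complex.log (1 + a₁ z) with hgdef
  have hgdiff : DifferentiableOn ℂ g (closedBall (0:ℂ) r₀) := by
    apply DifferentiableOn.clog
    · exact (differentiableOn_const 1).add (ha.mono hsub)
    · intro z hz
      left
      have h1 := hsmall z hz
      have h2 : |(a₁ z).re| ≤ ‖a₁ z‖ := Complex.abs_re_le_norm _
      have h3 := abs_le.mp (le_of_lt (lt_of_le_of_lt h2 h1))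
      simp only [Complex.add_re, Complex.one_re]
      linarith [h3.1]
  set R : NNReal := ⟨r₀, hr₀pos.le⟩ with hRdef
  have hRpos : 0 < R := by exact_mod_cast hr₀pos
  have hRr : (R : ℝ) = r₀ := rfl
  have hgs : HasFPowerSeriesOnBall g (cauchyPowerSeries g 0 R) 0 R :=
    DifferentiableOn.hasFPowerSeriesOnBall (by rw [hRr]; exact hgdiff) hRpos
  set P := cauchyPowerSeries g 0 (R : ℝ) with hPdef
  have hrad : (↑(R/2) : ℝ≥0∞) < P.radius := by
    refine lt_of_lt_of_le ?_ hgs.r_le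
    exact_mod_cast half_lt_self hRpos
  obtain ⟨C, hCpos, hC⟩ := P.norm_mul_pow_le_of_lt_radius hrad
  have hgp : ∀ n : ℕ, ‖P.coeff n‖ * ((r₀/2) ^ n) ≤ C := by
    intro n
    have := hC n
    rw [FormalMultilinearSeries.norm_apply_eq_norm_coef] at this
    have hco : ((R/2 : ℝ≥0) : ℝ) = r₀/2 := by rw [NNReal.coe_div, hRr]; norm_num
    rw [hco] at this
    exact this
  obtain ⟨N, hN1, hNd⟩ := small_divisor hl0 habs hroot hB
  set c : ℕ → ℂ := fun p => if p = 0 then 0 else P.coeff p / (l ^ p - 1) with hcdef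
  set ρ₁ : ℝ := r₀ / 2 * Real.exp (-1) / 2 with hρ₁def
  have hexp1 : Real.exp 1 * Real.exp (-1) = 1 := by rw [← Real.exp_add]; norm_num
  have hρ₁pos : 0 < ρ₁ := by positivity
  have hρ₁lt : ρ₁ < r₀ := by
    have he : Real.exp (-1) < 1 := Real.exp_lt_one_iff.mpr (by norm_num)
    have he0 : 0 < Real.exp (-1) := Real.exp_pos _
    rw [hρ₁def]; nlinarith
  set u : ℕ → ℝ := fun p => ‖c p‖ * ρ₁ ^ p with hudef
  have hq : Real.exp 1 * ρ₁ / (r₀/2) = 1/2 := by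
    rw [hρ₁def]
    field_simp
    nlinarith [hexp1]
  have hu : Summable u := by
    have hgeo : Summable (fun p : ℕ => C * (1/2 : ℝ)^p) :=
      (summable_geometric_of_lt_one (by norm_num) (by norm_num)).mul_left C
    apply Summable.of_norm_bounded_eventually hgeo
    rw [Nat.cofinite_eq_atTop]
    filter_upwards [eventually_ge_atTop N, eventually_ge_atTop 1] with p hpN hp1
    have hdiv := hNd p hpN
    have habs2 : 0 < ‖l ^ p - 1‖ := lt_of_lt_of_le (Real.exp_pos _) hdiv
    have hgpb : ‖P.coeff p‖ ≤ C / (r₀/2)^p := by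
      rw [le_div_iff₀ (by positivity)]
      exact hgp p
    have hcp : ‖c p‖ ≤ C / (r₀/2)^p * Real.exp p := by
      rw [hcdef]
      simp only [if_neg (by omega : ¬ p = 0)]
      rw [norm_div]
      rw [div_le_iff₀ habs2]
      have h3 : (1:ℝ) ≤ Real.exp p * ‖l^p - 1‖ := by
        calc (1:ℝ) = Real.exp p * Real.exp (-(p:ℝ)) := by rw [← Real.exp_add]; simp
        _ ≤ _ := mul_le_mul_of_nonneg_left hdiv (Real.exp_pos _).le
      calc ‖P.coeff p‖ = ‖P.coeff p‖ * 1 := (mul_one _).symm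
      _ ≤ (C / (r₀/2)^p) * (Real.exp p * ‖l^p - 1‖) := by
          apply mul_le_mul hgpb h3 (by norm_num) (by positivity)
      _ = C / (r₀/2)^p * Real.exp p * ‖l^p - 1‖ := by ring
    have hexpp : Real.exp (p:ℝ) = Real.exp 1 ^ p := by
      rw [← Real.exp_nat_mul]; norm_num
    have hub : u p ≤ C * (1/2:ℝ)^p := by
      calc u p ≤ C / (r₀/2)^p * Real.exp p * ρ₁^p :=
            mul_le_mul_of_nonneg_right hcp (pow_nonneg hρ₁pos.le p)
      _ = C * (Real.exp 1 * ρ₁)^p / (r₀/2)^p := by rw [hexpp, mul_pow]; ring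
      _ = C * ((1/2) * (r₀/2))^p / (r₀/2)^p := by
          rw [show Real.exp 1 * ρ₁ = 1/2 * (r₀/2) by
            rw [hρ₁def]; linear_combination (r₀/4) * hexp1]
      _ = C * (1/2:ℝ)^p := by
          rw [mul_pow, mul_div_assoc, mul_div_assoc, div_self (by positivity : ((r₀/2:ℝ))^p ≠ 0),
            mul_one]
    calc ‖u p‖ = u p := Real.norm_of_nonneg (by positivity)
    _ ≤ C * (1/2:ℝ)^p := hub
  set h : ℂ → ℂ := fun z => ∑' p : ℕ, c p * z ^ p with hhdef
  have hbound : ∀ p : ℕ, ∀ z : ℂ, ‖z‖ ≤ ρ₁ → ‖c p * z ^ p‖ ≤ u p := by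
    intro p z hz
    rw [norm_mul, norm_pow]
    exact mul_le_mul_of_nonneg_left (pow_le_pow_left₀ (norm_nonneg z) hz p)
      (norm_nonneg _)
  have hsummable : ∀ z : ℂ, ‖z‖ ≤ ρ₁ → Summable (fun p => c p * z ^ p) :=
    fun z hz => Summable.of_norm_bounded hu (fun p => hbound p z hz)
  have hdiffh : DifferentiableOn ℂ h (ball (0:ℂ) ρ₁) := by
    apply Complex.differentiableOn_tsum_of_summable_norm hu
      (fun p => ((differentiable_const (c p)).mul (differentiable_pow p)).differentiableOn)
      isOpen_ball
    intro p w hw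
    rw [mem_ball, dist_zero_right] at hw
    exact hbound p w hw.le
  refine ⟨ρ₁, hρ₁pos, fun z => Complex.exp (h z) - 1, ?_, ?_, ?_⟩
  · exact (Complex.differentiable_exp.comp_differentiableOn hdiffh).sub_const 1
  · have hz0 : h 0 = 0 := by
      rw [hhdef]
      simp only
      have : ∀ p : ℕ, c p * (0:ℂ)^p = 0 := by
        intro p
        rcases Nat.eq_zero_or_pos p with hp | hp
        · subst hp; rw [hcdef]; simp
        · rw [zero_pow (by omega), mul_zero]
      rw [tsum_congr fun p => this p, tsum_zero]
    simp [hz0]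
  · intro z hz
    rw [mem_ball, dist_zero_right] at hz
    have hzr₀ : z ∈ closedBall (0:ℂ) r₀ := by
      rw [mem_closedBall, dist_zero_right]; linarith
    have hlz : ‖l * z‖ = ‖z‖ := by rw [norm_mul, habs, one_mul]
    have hS1 : HasSum (fun p => c p * z^p) (h z) := (hsummable z hz.le).hasSum
    have hS2 : HasSum (fun p => c p * (l*z)^p) (h (l*z)) :=
      (hsummable (l*z) (by rw [hlz]; exact hz.le)).hasSum
    have hSg : HasSum (fun p : ℕ => z ^ p • P.coeff p) (g z) := by
      have hmem : z ∈ Metric.eball (0:ℂ) R := by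
        rw [Metric.emetric_ball_nnreal, mem_ball, dist_zero_right, hRr]
        linarith
      have := hgs.hasSum hmem
      simpa [FormalMultilinearSeries.apply_eq_pow_smul_coeff] using this
    have hP0 : P.coeff 0 = g 0 := hgs.coeff_zero 1
    have hg0 : g 0 = 0 := by rw [hgdef]; simp [ha0]
    have hkey : h (l*z) - h z = g z := by
      have hsubsum := hS2.sub hS1
      have heq : (fun p : ℕ => c p * (l*z)^p - c p * z^p) =
          fun p : ℕ => z ^ p • P.coeff p := by
        funext p
        rcases Nat.eq_zero_or_pos p with hp | hp
        · subst hp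
          rw [hcdef]
          simp [hP0, hg0]
        · have hne : l ^ p - 1 ≠ 0 := sub_ne_zero.mpr (hroot p hp)
          rw [hcdef]
          simp only [if_neg (by omega : ¬ p = 0)]
          rw [mul_pow, smul_eq_mul]
          field_simp
      rw [heq] at hsubsum
      exact hsubsum.unique hSg
    have hfz : (1 : ℂ) + a₁ z ≠ 0 := by
      intro h0
      have h1 := hsmall z hzr₀
      have : a₁ z = -1 := by linear_combination h0
      rw [this] at h1
      simp at h1
      linarith
    have hexpg : Complex.exp (g z) = 1 + a₁ z := Complex.exp_log hfz
    have hhl : h (l * z) = h z + g z := by linear_combination hkey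
    calc (Complex.exp (h z) - 1) * (1 + a₁ z) - (Complex.exp (h (l*z)) - 1) + a₁ z
        = Complex.exp (h z) * Complex.exp (g z) - Complex.exp (h z + g z) := by
          rw [hhl, Complex.exp_add, hexpg]; ring
    _ = 0 := by rw [← Complex.exp_add]; ring
end

section
/- Let λ ∈ ℂ with λ not a root of unity, and let α be a holomorphic function on D(0,r). If λ satisfies limsup_{m→∞} (1/m) log(1/|λ^m − 1|) < ∞, then there exists ρ > 0 and a holomorphic function ξ on D(0,ρ) with ξ(0) = 0 satisfying ξ(z) − ξ(λz) + α(z) = α(0) for all z ∈ D(0,ρ). Moreover the power series coefficients of ξ are given by ξ_n = α_n/(λ^n − 1), where α(z) = α(0) + Σ_{n≥1} α_n z^n. -/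
set_option maxHeartbeats 1000000


/-- if `λ` is not a root of unity and satisfies
`limsup_m (1/m) log(1/|λ^m − 1|) < ∞`, and `α` is holomorphic on `D(0,r)` with power
series coefficients `αc`, then the cohomological equation
`ξ(z) − ξ(λz) + α(z) = α(0)` has a holomorphic solution `ξ` near `0` with `ξ(0) = 0`,
whose power series coefficients are `ξ_n = α_n/(λ^n − 1)` for `n ≥ 1`. -/
theorem cohomological_equation_solution
    (l : ℂ) (hroot : ∀ n : ℕ, 1 ≤ n → l ^ n ≠ 1) (r : ℝ) (hr : 0 < r)
    (α : ℂ → ℂ) (αc : ℕ → ℂ)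
    (hα : ∀ z ∈ Metric.ball (0 : ℂ) r, HasSum (fun n : ℕ => αc n * z ^ n) (α z))
    (hl : Filter.limsup
        (fun m : ℕ => (((1 / m : ℝ) * Real.log (1 / ‖l ^ m - 1‖) : ℝ) : EReal))
        Filter.atTop < ⊤) :
    ∃ ρ > 0, ∃ ξ : ℂ → ℂ, DifferentiableOn ℂ ξ (Metric.ball 0 ρ) ∧ ξ 0 = 0 ∧
      (∀ z ∈ Metric.ball (0 : ℂ) ρ, ξ z - ξ (l * z) + α z = α 0) ∧
      (∀ z ∈ Metric.ball (0 : ℂ) ρ,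
        HasSum (fun n : ℕ => (if n = 0 then 0 else αc n / (l ^ n - 1)) * z ^ n) (ξ z)) := by
  classical
  set a : ℕ → ℝ := fun n => ‖l ^ n - 1‖ with ha_def
  have ha : ∀ n : ℕ, 1 ≤ n → 0 < a n := by
    intro n hn
    have : l ^ n - 1 ≠ 0 := sub_ne_zero.mpr (hroot n hn)
    simpa [ha_def] using (norm_pos_iff.mpr this)
  -- Step A : obtain C with eventual bound
  obtain ⟨C, hC1, -⟩ := EReal.lt_iff_exists_real_btwn.mp hl
  have hev := Filter.eventually_lt_of_limsup_lt hC1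
  rw [Filter.eventually_atTop] at hev
  obtain ⟨N, hN⟩ := hev
  have key : ∀ m : ℕ, max N 1 ≤ m → (a m)⁻¹ ≤ Real.exp C ^ m := by
    intro m hm
    have hm1 : 1 ≤ m := le_trans (le_max_right _ _) hm
    have hmN : N ≤ m := le_trans (le_max_left _ _) hm
    have h1 := hN m hmN
    have h2 : ((1 / m : ℝ) * Real.log (1 / a m)) < C := by exact_mod_cast h1
    have hmpos : (0 : ℝ) < m := by exact_mod_cast hm1
    have h3 : Real.log (1 / a m) < C * m := by
      have he : (m:ℝ) * (1 / m * Real.log (1 / a m)) = Real.log (1 / a m) := by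
        field_simp
      have := mul_lt_mul_of_pos_left h2 hmpos
      rw [he] at this
      linarith
    have hpos : 0 < (a m)⁻¹ := inv_pos.mpr (ha m hm1)
    have h4 : (a m)⁻¹ < Real.exp (C * m) := by
      rw [one_div] at h3
      exact (Real.log_lt_iff_lt_exp hpos).mp h3
    calc (a m)⁻¹ ≤ Real.exp (C * m) := le_of_lt h4
      _ = Real.exp C ^ m := by rw [mul_comm, Real.exp_nat_mul]
  set B : ℝ := max (Real.exp C) 1 with hB_def
  have hB1 : (1 : ℝ) ≤ B := le_max_right _ _
  have hB0 : (0 : ℝ) < B := lt_of_lt_of_le one_pos hB1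
  set A : ℝ := 1 + ∑ n ∈ Finset.range (max N 1 + 1), (a n)⁻¹ with hA_def
  have hsum_nonneg : ∀ n ∈ Finset.range (max N 1 + 1), (0:ℝ) ≤ (a n)⁻¹ := by
    intro n _; positivity
  have hA1 : (1 : ℝ) ≤ A := by
    have := Finset.sum_nonneg hsum_nonneg
    simp only [hA_def]; linarith
  have hA0 : (0 : ℝ) < A := lt_of_lt_of_le one_pos hA1
  have hbound : ∀ n : ℕ, 1 ≤ n → (a n)⁻¹ ≤ A * B ^ n := by
    intro n hn
    rcases le_or_gt (max N 1) n with h | h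
    · calc (a n)⁻¹ ≤ Real.exp C ^ n := key n h
        _ ≤ B ^ n := pow_le_pow_left₀ (Real.exp_nonneg C) (le_max_left _ _) n
        _ = 1 * B ^ n := (one_mul _).symm
        _ ≤ A * B ^ n := by
          have : (0:ℝ) < B ^ n := pow_pos hB0 n
          nlinarith
    · have hmem : n ∈ Finset.range (max N 1 + 1) := Finset.mem_range.mpr (by omega)
      have h1 : (a n)⁻¹ ≤ ∑ m ∈ Finset.range (max N 1 + 1), (a m)⁻¹ :=
        Finset.single_le_sum hsum_nonneg hmem
      have h2 : (1:ℝ) ≤ B ^ n := by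
        calc (1:ℝ) = 1 ^ n := (one_pow n).symm
          _ ≤ B ^ n := pow_le_pow_left₀ zero_le_one hB1 n
      have := Finset.sum_nonneg hsum_nonneg
      calc (a n)⁻¹ ≤ A := by simp only [hA_def]; linarith
        _ = A * 1 := (mul_one _).symm
        _ ≤ A * B ^ n := by nlinarith
  -- Step B : bound on coefficients αc
  have hz0mem : ((r / 2 : ℝ) : ℂ) ∈ Metric.ball (0 : ℂ) r := by
    simp only [Metric.mem_ball, dist_zero_right, Complex.norm_real, Real.norm_eq_abs]
    rw [abs_of_nonneg (by linarith)]; linarith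
  have hS := (hα _ hz0mem).summable
  have htend : Filter.Tendsto (fun n => ‖αc n * ((r / 2 : ℝ) : ℂ) ^ n‖)
      Filter.atTop (nhds 0) := by
    simpa using hS.tendsto_atTop_zero.norm
  obtain ⟨M, hM⟩ := htend.bddAbove_range
  have hM' : ∀ n : ℕ, ‖αc n‖ * (r / 2) ^ n ≤ M := by
    intro n
    have := hM (Set.mem_range_self n)
    simpa [norm_mul, norm_pow, Complex.norm_real, Real.norm_eq_abs,
      abs_of_pos hr, abs_of_nonneg (by linarith : (0:ℝ) ≤ r / 2)] using this
  have hM0 : (0 : ℝ) ≤ M := le_trans (by positivity) (hM' 0)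
  have hr2 : (0 : ℝ) < r / 2 := by linarith
  have hαc : ∀ n : ℕ, ‖αc n‖ ≤ M * (2 / r) ^ n := by
    intro n
    have hp : (0:ℝ) < (r / 2) ^ n := pow_pos hr2 n
    have h1 := hM' n
    have h2 : (2 / r : ℝ) ^ n = ((r / 2) ^ n)⁻¹ := by
      rw [← inv_pow]; congr 1; field_simp
    rw [h2, ← div_eq_mul_inv, le_div_iff₀ hp]
    exact h1
  -- coefficients of ξ
  set ξc : ℕ → ℂ := fun n => if n = 0 then 0 else αc n / (l ^ n - 1) with hξc_def
  set K : ℝ := (2 / r) * B with hK_def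
  have hK0 : (0 : ℝ) < K := by positivity
  have hξcb : ∀ n : ℕ, ‖ξc n‖ ≤ (M * A) * K ^ n := by
    intro n
    rcases Nat.eq_zero_or_pos n with rfl | hn
    · simp [hξc_def]; positivity
    · have h1 : ‖ξc n‖ = ‖αc n‖ * (a n)⁻¹ := by
        simp [hξc_def, Nat.pos_iff_ne_zero.mp hn, norm_div, ha_def,
          div_eq_mul_inv]
      rw [h1]
      have h2 := hαc n
      have h3 := hbound n hn
      have h4 : (0:ℝ) ≤ (a n)⁻¹ := by positivity
      calc ‖αc n‖ * (a n)⁻¹ ≤ (M * (2 / r) ^ n) * (A * B ^ n) := by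
            apply mul_le_mul h2 h3 h4 (by positivity)
        _ = (M * A) * K ^ n := by rw [hK_def, mul_pow]; ring
  -- choice of ρ
  set ρ : ℝ := min r (1 / (2 * K * (1 + ‖l‖))) with hρ_def
  have habs_l : (0:ℝ) ≤ ‖l‖ := norm_nonneg _
  have hρ0 : 0 < ρ := by
    apply lt_min hr; positivity
  have hρr : ρ ≤ r := min_le_left _ _
  have hKρ : K * ρ ≤ 1 / (2 * (1 + ‖l‖)) := by
    have h1 : ρ ≤ 1 / (2 * K * (1 + ‖l‖)) := min_le_right _ _
    rw [mul_comm]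
    rw [← le_div_iff₀ hK0]
    calc ρ ≤ 1 / (2 * K * (1 + ‖l‖)) := h1
      _ = 1 / (2 * (1 + ‖l‖)) / K := by
        rw [div_div]; congr 1; ring
  -- summability
  have hsummable : ∀ w : ℂ, K * ‖w‖ < 1 → Summable (fun n : ℕ => ξc n * w ^ n) := by
    intro w hw
    apply Summable.of_norm_bounded (g := fun n => (M * A) * (K * ‖w‖) ^ n)
      (((summable_geometric_of_lt_one (by positivity) hw)).mul_left _)
    intro n
    rw [norm_mul, norm_pow, mul_pow]
    calc ‖ξc n‖ * ‖w‖ ^ n ≤ ((M * A) * K ^ n) * ‖w‖ ^ n := by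
          apply mul_le_mul_of_nonneg_right (hξcb n) (by positivity)
      _ = M * A * (K ^ n * ‖w‖ ^ n) := by ring
  have hball : ∀ z : ℂ, z ∈ Metric.ball (0:ℂ) ρ → K * ‖z‖ < 1 := by
    intro z hz
    rw [Metric.mem_ball, dist_zero_right] at hz
    have h1 : K * ‖z‖ < K * ρ := by
      exact mul_lt_mul_of_pos_left hz hK0
    have h2 : 1 / (2 * (1 + ‖l‖)) ≤ 1 := by
      rw [div_le_one (by positivity)]; linarith
    linarith [hKρ]
  have hball' : ∀ z : ℂ, z ∈ Metric.ball (0:ℂ) ρ → K * ‖l * z‖ < 1 := by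
    intro z hz
    rw [Metric.mem_ball, dist_zero_right] at hz
    have h1 : K * (‖l‖ * ‖z‖) ≤ ‖l‖ * (K * ρ) := by
      have h := mul_le_mul_of_nonneg_left
        (le_of_lt (mul_lt_mul_of_pos_left hz hK0)) habs_l
      calc K * (‖l‖ * ‖z‖) = ‖l‖ * (K * ‖z‖) := by ring
        _ ≤ ‖l‖ * (K * ρ) := h
    have h2 : ‖l‖ * (K * ρ) ≤ ‖l‖ / (2 * (1 + ‖l‖)) := by
      have h := mul_le_mul_of_nonneg_left hKρ habs_l
      rwa [mul_one_div] at h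
    have h3 : ‖l‖ / (2 * (1 + ‖l‖)) < 1 := by
      rw [div_lt_one (by positivity)]; linarith
    calc K * ‖l * z‖ = K * (‖l‖ * ‖z‖) := by
          rw [norm_mul]
      _ ≤ ‖l‖ * (K * ρ) := h1
      _ < 1 := lt_of_le_of_lt h2 h3
  -- the solution
  set ξ : ℂ → ℂ := fun w => ∑' n : ℕ, ξc n * w ^ n with hξ_def
  have hξ_hasSum : ∀ z : ℂ, z ∈ Metric.ball (0:ℂ) ρ →
      HasSum (fun n : ℕ => ξc n * z ^ n) (ξ z) := by
    intro z hz
    exact (hsummable z (hball z hz)).hasSum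
  have hα0 : α 0 = αc 0 := by
    have h1 := hα 0 (Metric.mem_ball_self hr)
    have h2 : HasSum (fun n : ℕ => αc n * (0:ℂ) ^ n) (αc 0) := by
      have : (fun n : ℕ => αc n * (0:ℂ) ^ n) = fun n => if n = 0 then αc 0 else 0 := by
        funext n; rcases Nat.eq_zero_or_pos n with rfl | hn
        · simp
        · simp [zero_pow (Nat.pos_iff_ne_zero.mp hn), Nat.pos_iff_ne_zero.mp hn]
      rw [this]
      exact hasSum_ite_eq 0 (αc 0)
    exact h1.unique h2
  refine ⟨ρ, hρ0, ξ, ?_, ?_, ?_, ?_⟩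
  · -- DifferentiableOn
    have hKρ1 : K * ρ < 1 := by
      have hlt : (1:ℝ) / (2 * (1 + ‖l‖)) < 1 := by
        rw [div_lt_one (by positivity)]; linarith
      linarith [hKρ]
    have hu : Summable (fun n : ℕ => (M * A) * (K * ρ) ^ n) :=
      (summable_geometric_of_lt_one (by positivity) hKρ1).mul_left _
    have hdiff : ∀ n : ℕ, DifferentiableOn ℂ (fun w : ℂ => ξc n * w ^ n)
        (Metric.ball (0:ℂ) ρ) :=
      fun n => ((differentiable_pow n).const_mul (ξc n)).differentiableOn
    have hle : ∀ (n : ℕ) (w : ℂ), w ∈ Metric.ball (0:ℂ) ρ →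
        ‖ξc n * w ^ n‖ ≤ (M * A) * (K * ρ) ^ n := by
      intro n w hw
      rw [Metric.mem_ball, dist_zero_right] at hw
      rw [norm_mul, norm_pow, mul_pow]
      calc ‖ξc n‖ * ‖w‖ ^ n ≤ ((M * A) * K ^ n) * ‖w‖ ^ n :=
            mul_le_mul_of_nonneg_right (hξcb n) (by positivity)
        _ ≤ M * A * (K ^ n * ρ ^ n) := by
            have h5 : ‖w‖ ^ n ≤ ρ ^ n := pow_le_pow_left₀ (norm_nonneg w) (le_of_lt hw) n
            have h6 := mul_le_mul_of_nonneg_left h5 (by positivity : (0:ℝ) ≤ M * A * K ^ n)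
            calc M * A * K ^ n * ‖w‖ ^ n ≤ M * A * K ^ n * ρ ^ n := h6
              _ = M * A * (K ^ n * ρ ^ n) := by ring
        _ = M * A * (K ^ n * ρ ^ n) := rfl
    rw [hξ_def]
    exact Complex.differentiableOn_tsum_of_summable_norm hu hdiff Metric.isOpen_ball hle
  · -- ξ 0 = 0
    have : (fun n : ℕ => ξc n * (0:ℂ) ^ n) = fun _ => (0:ℂ) := by
      funext n; rcases Nat.eq_zero_or_pos n with rfl | hn
      · simp [hξc_def]
      · simp [zero_pow (Nat.pos_iff_ne_zero.mp hn)]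
    simp only [hξ_def, this, tsum_zero]
  · -- functional equation
    intro z hz
    have hzr : z ∈ Metric.ball (0:ℂ) r := by
      rw [Metric.mem_ball, dist_zero_right] at *
      linarith
    have h1 := hξ_hasSum z hz
    have h2 : HasSum (fun n : ℕ => ξc n * (l * z) ^ n) (ξ (l * z)) :=
      (hsummable (l * z) (hball' z hz)).hasSum
    have h3 := (h1.sub h2).add (hα z hzr)
    have h4 : (fun n : ℕ => ξc n * z ^ n - ξc n * (l * z) ^ n + αc n * z ^ n)
        = fun n : ℕ => if n = 0 then αc 0 else 0 := by
      funext n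
      rcases Nat.eq_zero_or_pos n with rfl | hn
      · simp [hξc_def]
      · have hne : n ≠ 0 := Nat.pos_iff_ne_zero.mp hn
        have hln : l ^ n - 1 ≠ 0 := sub_ne_zero.mpr (hroot n hn)
        simp only [hξc_def, if_neg hne, mul_pow]
        field_simp
        ring
    rw [h4] at h3
    have h5 : HasSum (fun n : ℕ => if n = 0 then αc 0 else 0) (αc 0) :=
      hasSum_ite_eq 0 (αc 0)
    have := h3.unique h5
    rw [hα0]
    exact this
  · -- HasSum statement
    intro z hz
    exact hξ_hasSum z hz
end

section
/- Let λ ∈ ℂ with |λ| = 1, not a root of unity. Suppose the formal power series ξ(z) = Σ_{n≥1} ξ_n z^n has coefficients satisfying |ξ_n| ≤ M/(r^n |λ^n − 1|) for all n ≥ 1, where M, r > 0. If limsup_{m→∞} (1/m) log(1/|λ^m − 1|) < ∞, then ξ(z) has positive radius of convergence. -/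
/-- if `|ξ_n| ≤ M/(r^n |λ^n − 1|)` for all `n ≥ 1` and
`limsup_m (1/m) log(1/|λ^m − 1|) < ∞`, then the power series `Σ ξ_n z^n` has positive
radius of convergence. -/
theorem small_divisor_bound_gives_positive_radius
    (l : ℂ) (habs : ‖l‖ = 1) (hroot : ∀ n : ℕ, 1 ≤ n → l ^ n ≠ 1)
    (M r : ℝ) (hM : 0 < M) (hr : 0 < r) (ξ : ℕ → ℂ)
    (hb : ∀ n : ℕ, 1 ≤ n → ‖ξ n‖ ≤ M / (r ^ n * ‖l ^ n - 1‖))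
    (hl : Filter.limsup
        (fun m : ℕ => (((1 / m : ℝ) * Real.log (1 / ‖l ^ m - 1‖) : ℝ) : EReal))
        Filter.atTop < ⊤) :
    ∃ R > 0, ∀ z : ℂ, ‖z‖ < R → Summable fun n : ℕ => ξ n * z ^ n := by
  set f := fun m : ℕ => (((1 / m : ℝ) * Real.log (1 / ‖l ^ m - 1‖) : ℝ) : EReal)
    with hf
  obtain ⟨B, hB⟩ : ∃ B : ℝ, Filter.limsup f Filter.atTop < (B : EReal) := by
    refine ⟨(Filter.limsup f Filter.atTop).toReal + 1, ?_⟩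
    calc Filter.limsup f Filter.atTop ≤ ((Filter.limsup f Filter.atTop).toReal : EReal) :=
        EReal.le_coe_toReal hl.ne
      _ < _ := by exact_mod_cast lt_add_one _
  have hev : ∀ᶠ m in Filter.atTop, f m < (B : EReal) :=
    Filter.eventually_lt_of_limsup_lt hB
  obtain ⟨N, hN⟩ := Filter.eventually_atTop.mp hev
  set q := r * Real.exp (-B) with hq
  have hq0 : 0 < q := mul_pos hr (Real.exp_pos _)
  refine ⟨q / 2, by positivity, fun z hz => ?_⟩
  have key : ∀ m : ℕ, N ≤ m → 1 ≤ m → ‖ξ m‖ ≤ M / q ^ m := by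
    intro m hm hm1
    have ha : 0 < ‖l ^ m - 1‖ := by
      rw [norm_pos_iff]
      exact sub_ne_zero.mpr (hroot m hm1)
    have h1 : ((1 / m : ℝ) * Real.log (1 / ‖l ^ m - 1‖)) < B :=
      EReal.coe_lt_coe_iff.mp (hN m hm)
    have hm0 : (0:ℝ) < m := by exact_mod_cast hm1
    have h2 : Real.log (1 / ‖l ^ m - 1‖) < B * m := by
      rw [one_div_mul_eq_div] at h1
      exact (div_lt_iff₀ hm0).mp h1
    rw [Real.log_div one_ne_zero ha.ne', Real.log_one, zero_sub, neg_lt] at h2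
    have h3 : Real.exp (-B) ^ m ≤ ‖l ^ m - 1‖ := by
      have := Real.exp_lt_exp.mpr h2
      rw [Real.exp_log ha] at this
      calc Real.exp (-B) ^ m = Real.exp (m * (-B)) := (Real.exp_nat_mul _ m).symm
        _ = Real.exp (-(B * m)) := by ring_nf
        _ ≤ ‖l ^ m - 1‖ := this.le
    calc ‖ξ m‖ ≤ M / (r ^ m * ‖l ^ m - 1‖) := hb m hm1
      _ ≤ M / (r ^ m * Real.exp (-B) ^ m) := by
          gcongr
      _ = M / q ^ m := by rw [hq, mul_pow]
  apply Summable.of_norm_bounded_eventually_nat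
    (summable_geometric_two.mul_left M)
  filter_upwards [Filter.eventually_atTop.mpr ⟨max N 1, fun n hn => hn⟩] with n hn
  have hnN : N ≤ n := le_trans (le_max_left _ _) hn
  have hn1 : 1 ≤ n := le_trans (le_max_right _ _) hn
  have hzq : ‖z‖ ^ n ≤ (q / 2) ^ n :=
    pow_le_pow_left₀ (norm_nonneg z) hz.le n
  calc ‖ξ n * z ^ n‖ = ‖ξ n‖ * ‖z‖ ^ n := by
        simp [norm_mul, norm_pow]
    _ ≤ (M / q ^ n) * (q / 2) ^ n := by
        apply mul_le_mul (key n hnN hn1) hzq (by positivity)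
        positivity
    _ = M * (1/2:ℝ)^n := by
        have hqn : (q : ℝ) ^ n ≠ 0 := by positivity
        field_simp
        rw [div_pow, one_div_pow, mul_one_div]
end

section
/- Let λ ∈ ℂ with |λ| = 1, λ not a root of unity, and suppose limsup_{m→∞} (1/m) log(1/ω(m)) = +∞ where ω(m) = min_{2≤k≤m}|λ^k − λ|. Then limsup_{n→∞} (1/n) Σ_{j=1}^{n} log(1/|λ^j − 1|) = +∞; in particular the sequence c_n = ∏_{j=1}^{n} (λ^j − 1)^{-1} satisfies limsup_{n→∞} (1/n) log|c_n| = +∞. -/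
section aux

variable {l : ℂ}

lemma aux_ne (hroot : ∀ n : ℕ, 1 ≤ n → l ^ n ≠ 1) {j : ℕ} (hj : 1 ≤ j) :
    l ^ j - 1 ≠ 0 := sub_ne_zero.mpr (hroot j hj)

lemma aux_term_ge (habs : ‖l‖ = 1) (hroot : ∀ n : ℕ, 1 ≤ n → l ^ n ≠ 1)
    {j : ℕ} (hj : 1 ≤ j) :
    -Real.log 2 ≤ Real.log (1 / ‖l ^ j - 1‖) := by
  have hpos : 0 < ‖l ^ j - 1‖ := by
    simpa using (aux_ne hroot hj)
  have hle : ‖l ^ j - 1‖ ≤ 2 := by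
    have := norm_sub_le (l ^ j) 1
    calc ‖l ^ j - 1‖ ≤ ‖l ^ j‖ + ‖(1:ℂ)‖ := this
    _ = 2 := by rw [norm_pow, habs, one_pow, norm_one]; norm_num
  rw [one_div, Real.log_inv]
  have := Real.log_le_log hpos hle
  linarith

/-- ω(m) is attained at some `|l^j - 1|` with `1 ≤ j ≤ m - 1`. -/
lemma aux_omega_attained (habs : ‖l‖ = 1) {m : ℕ} (hm : 2 ≤ m) :
    ∃ j : ℕ, 1 ≤ j ∧ j ≤ m - 1 ∧ brjunoOmega l m = ‖l ^ j - 1‖ := by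
  have hne : ((fun k : ℕ => ‖l ^ k - l‖) '' Set.Icc 2 m).Nonempty :=
    ⟨‖l ^ 2 - l‖, ⟨2, ⟨le_refl _, hm⟩, rfl⟩⟩
  have hfin : ((fun k : ℕ => ‖l ^ k - l‖) '' Set.Icc 2 m).Finite :=
    (Set.finite_Icc 2 m).image _
  have hmem := hne.csInf_mem hfin
  obtain ⟨k, hk, hkval⟩ := hmem
  have hk2 : 2 ≤ k := hk.1
  have hkm : k ≤ m := hk.2
  refine ⟨k - 1, by omega, by omega, ?_⟩
  have hfac : l ^ k - l = l * (l ^ (k - 1) - 1) := by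
    have hmul : l * l ^ (k - 1) = l ^ k := by
      rw [← pow_succ']
      congr 1
      omega
    rw [mul_sub, hmul, mul_one]
  rw [brjunoOmega, ← hkval]
  show ‖l ^ k - l‖ = _
  rw [hfac, norm_mul, habs, one_mul]

end aux

/-- if `limsup_m (1/m) log(1/ω(m)) = +∞`, then
`limsup_n (1/n) Σ_{j=1}^n log(1/|λ^j − 1|) = +∞`; in particular
`c_n = ∏_{j=1}^n (λ^j − 1)⁻¹` satisfies `limsup_n (1/n) log|c_n| = +∞`. -/
theorem cremer_partial_products_blow_up
    (l : ℂ) (habs : ‖l‖ = 1) (hroot : ∀ n : ℕ, 1 ≤ n → l ^ n ≠ 1)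
    (hC : Filter.limsup
        (fun m : ℕ => (((1 / m : ℝ) * Real.log (1 / brjunoOmega l m) : ℝ) : EReal))
        Filter.atTop = ⊤) :
    Filter.limsup
        (fun n : ℕ =>
          (((1 / n : ℝ) * ∑ j ∈ Finset.Icc 1 n, Real.log (1 / ‖l ^ j - 1‖) : ℝ) :
            EReal))
        Filter.atTop = ⊤ ∧
      Filter.limsup
        (fun n : ℕ =>
          (((1 / n : ℝ) *
              Real.log (‖∏ j ∈ Finset.Icc 1 n, (l ^ j - 1)⁻¹‖) : ℝ) : EReal))
        Filter.atTop = ⊤ := by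
  set A : ℕ → ℝ := fun j => Real.log (1 / ‖l ^ j - 1‖) with hA
  set f : ℕ → ℝ := fun n => (1 / n : ℝ) * ∑ j ∈ Finset.Icc 1 n, A j with hf
  set g : ℕ → ℝ := fun m => (1 / m : ℝ) * Real.log (1 / brjunoOmega l m) with hg
  -- key pointwise inequality
  have key : ∀ n : ℕ, 1 ≤ n → g (n + 1) - 2 * Real.log 2 ≤ f n := by
    intro n hn
    obtain ⟨j₀, hj₀1, hj₀2, hj₀eq⟩ := aux_omega_attained habs (l := l) (m := n + 1) (by omega)
    have hj₀n : j₀ ∈ Finset.Icc 1 n := by simp; omega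
    have hL : Real.log (1 / brjunoOmega l (n + 1)) = A j₀ := by rw [hj₀eq]
    have hlog2 : 0 ≤ Real.log 2 := Real.log_nonneg (by norm_num)
    have hterm : ∀ j ∈ Finset.Icc 1 n, -Real.log 2 ≤ A j := by
      intro j hj
      exact aux_term_ge habs hroot (Finset.mem_Icc.mp hj).1
    -- sum bound: Σ A ≥ A j₀ - (n-1) log 2 ≥ A j₀ - n log 2
    have hsum : A j₀ - n * Real.log 2 ≤ ∑ j ∈ Finset.Icc 1 n, A j := by
      have h1 : A j₀ + Real.log 2 ≤ ∑ j ∈ Finset.Icc 1 n, (A j + Real.log 2) := by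
        apply Finset.single_le_sum (f := fun j => A j + Real.log 2) _ hj₀n
        intro j hj
        have := hterm j hj
        show 0 ≤ A j + Real.log 2
        linarith
      have h2 : ∑ j ∈ Finset.Icc 1 n, (A j + Real.log 2)
          = (∑ j ∈ Finset.Icc 1 n, A j) + n * Real.log 2 := by
        rw [Finset.sum_add_distrib, Finset.sum_const, Nat.card_Icc]
        simp [nsmul_eq_mul]
      rw [h2] at h1
      linarith
    have hnpos : (0:ℝ) < n := by exact_mod_cast hn
    have hn1pos : (0:ℝ) < (n:ℝ) + 1 := by linarith
    -- f n ≥ (1/n) A j₀ - log 2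
    have step1 : (1 / n : ℝ) * A j₀ - Real.log 2 ≤ f n := by
      have := mul_le_mul_of_nonneg_left hsum (le_of_lt (one_div_pos.mpr hnpos))
      rw [mul_sub] at this
      have hninv : (1 / n : ℝ) * (n * Real.log 2) = Real.log 2 := by
        field_simp
      rw [hninv] at this
      exact this
    -- (1/n) A j₀ ≥ (1/(n+1)) A j₀ - log 2
    have hAj₀ : -Real.log 2 ≤ A j₀ := hterm j₀ hj₀n
    have step2 : (1 / ((n:ℝ) + 1)) * A j₀ - Real.log 2 ≤ (1 / n : ℝ) * A j₀ := by
      rcases le_or_gt 0 (A j₀) with h | h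
      · have : (1 / ((n:ℝ) + 1)) * A j₀ ≤ (1 / n : ℝ) * A j₀ := by
          apply mul_le_mul_of_nonneg_right _ h
          apply one_div_le_one_div_of_le hnpos
          linarith
        linarith
      · have h1 : -Real.log 2 ≤ (1 / n : ℝ) * A j₀ := by
          have : (1 / n : ℝ) * (-Real.log 2) ≤ (1 / n : ℝ) * A j₀ :=
            mul_le_mul_of_nonneg_left hAj₀ (le_of_lt (one_div_pos.mpr hnpos))
          have h1n : (1 / n : ℝ) ≤ 1 := by
            rw [div_le_one hnpos]; exact_mod_cast hn
          nlinarith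
        have h2 : (1 / ((n:ℝ) + 1)) * A j₀ ≤ 0 :=
          mul_nonpos_of_nonneg_of_nonpos (le_of_lt (one_div_pos.mpr hn1pos)) h.le
        linarith
    have hgval : g (n + 1) = (1 / ((n:ℝ) + 1)) * A j₀ := by
      rw [hg]
      push_cast
      rw [hL]
    rw [hgval]
    linarith
  -- main limsup argument
  have main : Filter.limsup (fun n : ℕ => ((f n : ℝ) : EReal)) Filter.atTop = ⊤ := by
    rw [EReal.eq_top_iff_forall_lt]
    intro y
    have hylt : ((y + 1 + 2 * Real.log 2 : ℝ) : EReal)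
        < Filter.limsup (fun m : ℕ => ((g m : ℝ) : EReal)) Filter.atTop := by
      rw [hC]; exact EReal.coe_lt_top _
    have hfreq : ∃ᶠ m in Filter.atTop,
        ((y + 1 + 2 * Real.log 2 : ℝ) : EReal) < ((g m : ℝ) : EReal) :=
      Filter.frequently_lt_of_lt_limsup (by isBoundedDefault) hylt
    have hfreq2 : ∃ᶠ m in Filter.atTop,
        (((y + 1 + 2 * Real.log 2 : ℝ) : EReal) < ((g m : ℝ) : EReal)) ∧ 2 ≤ m :=
      hfreq.and_eventually (Filter.eventually_ge_atTop 2)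
    have hfreq3 : ∃ᶠ m in Filter.atTop, (y : ℝ) + 1 ≤ f (m - 1) := by
      apply hfreq2.mono
      rintro m ⟨hm1, hm2⟩
      have hm1' : (y + 1 + 2 * Real.log 2 : ℝ) < g m := by exact_mod_cast hm1
      have hkey := key (m - 1) (by omega)
      have hmm : m - 1 + 1 = m := by omega
      rw [hmm] at hkey
      linarith
    have hfreq4 : ∃ᶠ n in Filter.atTop, (y : ℝ) + 1 ≤ f n := by
      have ht : Filter.Tendsto (fun m : ℕ => m - 1) Filter.atTop Filter.atTop :=
        Filter.tendsto_atTop_atTop.mpr (fun b => ⟨b + 1, fun a ha => by omega⟩)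
      exact ht.frequently hfreq3
    have hfreq5 : ∃ᶠ n in Filter.atTop,
        (((y : ℝ) + 1 : ℝ) : EReal) ≤ ((f n : ℝ) : EReal) := by
      apply hfreq4.mono
      intro n hn
      exact_mod_cast hn
    have := Filter.le_limsup_of_frequently_le hfreq5 (by isBoundedDefault)
    calc (y : EReal) < (((y : ℝ) + 1 : ℝ) : EReal) := by
          exact_mod_cast (lt_add_one y)
    _ ≤ _ := this
  constructor
  · exact main
  · have heq : ∀ n : ℕ,
        Real.log (‖∏ j ∈ Finset.Icc 1 n, (l ^ j - 1)⁻¹‖)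
          = ∑ j ∈ Finset.Icc 1 n, A j := by
      intro n
      rw [norm_prod]
      rw [Real.log_prod]
      · apply Finset.sum_congr rfl
        intro j hj
        rw [norm_inv, hA]
        simp [one_div]
      · intro j hj
        rw [norm_inv]
        exact inv_ne_zero
          (norm_ne_zero_iff.mpr (aux_ne hroot (Finset.mem_Icc.mp hj).1))
    have : (fun n : ℕ =>
        (((1 / n : ℝ) *
            Real.log (‖∏ j ∈ Finset.Icc 1 n, (l ^ j - 1)⁻¹‖) : ℝ) : EReal))
        = fun n : ℕ => ((f n : ℝ) : EReal) := by
      funext n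
      rw [heq n]
    rw [this]
    exact main
end

section
/- Let λ ∈ ℂ be a Cremer number with |λ| = 1. Then there exists a holomorphic function a(z) on the unit disk with a(0) = 0 such that the skew-product F(z,w) = (λz, w + a(z) + w²) admits no holomorphic invariant curve of the form {w = φ(z)} through a neighborhood of z = 0: the unique formal power series solution of φ(λz) = φ(z) + a(z) + φ(z)² with φ(0) = 0 diverges. -/
set_option maxHeartbeats 1000000

open Filter

/-- Simultaneous recursive definition of the coefficients `a_n` (first component)
and `φ_n` (second component) of the Cremer example. -/
noncomputable def cremerRec (l : ℂ) : ℕ → ℂ × ℂ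
  | 0 => (0, 0)
  | n + 1 =>
    let c : ℂ := ∑ i ∈ (Finset.Ico 1 (n + 1)).attach,
      (cremerRec l i.1).2 * (cremerRec l (n + 1 - i.1)).2
    let a : ℂ := if ‖1 + c‖ < 2⁻¹ then 0 else 1
    (a, (a + c) / (l ^ (n + 1) - 1))
decreasing_by
  all_goals (have h := Finset.mem_Ico.mp i.2; omega)

noncomputable def acF (l : ℂ) (n : ℕ) : ℂ := (cremerRec l n).1
noncomputable def phiF (l : ℂ) (n : ℕ) : ℂ := (cremerRec l n).2
noncomputable def cConv (l : ℂ) (n : ℕ) : ℂ := ∑ i ∈ Finset.Ico 1 n, phiF l i * phiF l (n - i)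

lemma acF_zero (l : ℂ) : acF l 0 = 0 := by simp [acF, cremerRec]
lemma phiF_zero (l : ℂ) : phiF l 0 = 0 := by simp [phiF, cremerRec]

lemma cremerRec_succ (l : ℂ) (n : ℕ) : cremerRec l (n + 1) =
    (if ‖1 + cConv l (n+1)‖ < 2⁻¹ then 0 else 1,
      ((if ‖1 + cConv l (n+1)‖ < 2⁻¹ then (0:ℂ) else 1) + cConv l (n+1)) / (l ^ (n + 1) - 1)) := by
  rw [cremerRec]
  have hc : (∑ i ∈ (Finset.Ico 1 (n + 1)).attach,
      (cremerRec l i.1).2 * (cremerRec l (n + 1 - i.1)).2) = cConv l (n+1) := by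
    rw [cConv]
    exact Finset.sum_attach _ (fun i => (cremerRec l i).2 * (cremerRec l (n + 1 - i)).2)
  simp only [hc]

lemma acF_succ (l : ℂ) (n : ℕ) :
    acF l (n+1) = if ‖1 + cConv l (n+1)‖ < 2⁻¹ then 0 else 1 := by
  rw [acF, cremerRec_succ]

lemma phiF_succ (l : ℂ) (n : ℕ) :
    phiF l (n+1) = (acF l (n+1) + cConv l (n+1)) / (l ^ (n + 1) - 1) := by
  rw [phiF, cremerRec_succ, acF_succ]

lemma num_lb (c : ℂ) : (1:ℝ)/2 ≤ ‖(if ‖1 + c‖ < 2⁻¹ then (0:ℂ) else 1) + c‖ := by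
  split_ifs with h
  · have h1 : (1:ℝ) - ‖1 + c‖ ≤ ‖c‖ := by
      have := norm_sub_norm_le (1 : ℂ) (1 + c)
      simpa [neg_add_eq_sub] using this
    have : (1:ℝ)/2 ≤ ‖c‖ := by
      have h2 : ‖1 + c‖ < 1/2 := by simpa [one_div] using h
      linarith
    simpa using this
  · push_neg at h
    have : (1:ℝ)/2 ≤ ‖1 + c‖ := by simpa [one_div] using h
    simpa [add_comm] using this

lemma numF_lb (l : ℂ) (m : ℕ) : (1:ℝ)/2 ≤ ‖acF l (m+1) + cConv l (m+1)‖ := by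
  rw [acF_succ]
  exact num_lb _

lemma acF_abs_le (l : ℂ) (n : ℕ) : ‖acF l n‖ ≤ 1 := by
  cases n with
  | zero => simp [acF_zero]
  | succ m =>
    rw [acF_succ]
    split_ifs <;> simp

lemma antidiag_red (f : ℕ → ℂ) (hf : f 0 = 0) (m : ℕ) (hm : 1 ≤ m) :
    ∑ p ∈ Finset.HasAntidiagonal.antidiagonal m, f p.1 * f p.2 = ∑ i ∈ Finset.Ico 1 m, f i * f (m - i) := by
  rw [Finset.Nat.sum_antidiagonal_eq_sum_range_succ_mk]
  rw [Finset.sum_range_succ]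
  simp only [Nat.sub_self, hf, mul_zero, add_zero]
  rw [Finset.range_eq_Ico, Finset.sum_eq_sum_Ico_succ_bot hm]
  simp [hf]

/-- Uniqueness of the formal solution. -/
lemma formal_unique (l : ℂ) (hl : ∀ n : ℕ, 1 ≤ n → l ^ n ≠ 1)
    (φ : PowerSeries ℂ) (h0 : PowerSeries.constantCoeff φ = 0)
    (heq : PowerSeries.rescale l φ = φ + PowerSeries.mk (acF l) + φ ^ 2) :
    ∀ n, PowerSeries.coeff n φ = phiF l n := by
  intro n
  induction n using Nat.strong_induction_on with
  | _ n ih =>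
    match n with
    | 0 => rw [PowerSeries.coeff_zero_eq_constantCoeff, h0, phiF_zero]
    | m + 1 =>
      have hc := congrArg (PowerSeries.coeff (m+1)) heq
      rw [PowerSeries.coeff_rescale] at hc
      rw [map_add, map_add, PowerSeries.coeff_mk, sq, PowerSeries.coeff_mul] at hc
      have hred : ∑ p ∈ Finset.HasAntidiagonal.antidiagonal (m+1),
          PowerSeries.coeff p.1 φ * PowerSeries.coeff p.2 φ = cConv l (m+1) := by
        rw [antidiag_red (fun k => PowerSeries.coeff k φ) (by simpa using h0) (m+1) (by omega)]
        unfold cConv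
        refine Finset.sum_congr rfl fun i hi => ?_
        obtain ⟨h1, h2⟩ := Finset.mem_Ico.mp hi
        rw [ih i (by omega), ih (m + 1 - i) (by omega)]
      rw [hred] at hc
      -- hc : l^(m+1) * coeff (m+1) φ = coeff (m+1) φ + acF l (m+1) + cConv l (m+1)
      have hne : l ^ (m+1) - 1 ≠ 0 := sub_ne_zero.mpr (hl (m+1) (by omega))
      rw [phiF_succ]
      field_simp
      linear_combination hc

lemma not_root_of_unity (l : ℂ)
    (hC : Filter.limsup
        (fun m : ℕ => (((1 / m : ℝ) * Real.log (1 / brjunoOmega l m) : ℝ) : EReal))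
        Filter.atTop = ⊤) :
    ∀ n : ℕ, 1 ≤ n → l ^ n ≠ 1 := by
  intro n hn hpow
  have homega : ∀ m : ℕ, n + 1 ≤ m → brjunoOmega l m = 0 := by
    intro m hm
    have hmem : (0 : ℝ) ∈ (fun k : ℕ => ‖l ^ k - l‖) '' Set.Icc 2 m := by
      refine ⟨n + 1, ⟨by omega, hm⟩, ?_⟩
      simp [pow_succ, hpow]
    refine le_antisymm (csInf_le ?_ hmem) (Real.sInf_nonneg ?_)
    · exact ((Set.finite_Icc 2 m).image _).bddBelow
    · rintro x ⟨k, _, rfl⟩; positivity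
  have hev : (fun m : ℕ => (((1 / m : ℝ) * Real.log (1 / brjunoOmega l m) : ℝ) : EReal))
      =ᶠ[atTop] fun _ => (0 : EReal) := by
    filter_upwards [eventually_ge_atTop (n + 1)] with m hm
    rw [homega m hm]
    norm_num
  rw [limsup_congr hev, limsup_const] at hC
  exact absurd hC (by simp)

lemma small_divisors (l : ℂ) (habs : ‖l‖ = 1)
    (hC : Filter.limsup
        (fun m : ℕ => (((1 / m : ℝ) * Real.log (1 / brjunoOmega l m) : ℝ) : EReal))
        Filter.atTop = ⊤) :
    ∀ M : ℝ, ∀ N : ℕ, ∃ n : ℕ, N ≤ n ∧ 1 ≤ n ∧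
      ‖l ^ n - 1‖ < Real.exp (-(n * M)) := by
  have hl := not_root_of_unity l hC
  have hfreq : ∀ K : ℝ, ∃ᶠ m : ℕ in atTop,
      (K : EReal) < (((1 / m : ℝ) * Real.log (1 / brjunoOmega l m) : ℝ) : EReal) := by
    intro K
    by_contra h
    rw [Filter.not_frequently] at h
    simp only [not_lt] at h
    have hle := Filter.limsup_le_of_le (f := atTop) (h := h)
    rw [hC] at hle
    exact absurd hle (by simp)
  have hsd0 : ∀ K : ℝ, 1 ≤ K → ∃ n : ℕ, 1 ≤ n ∧
      ‖l ^ n - 1‖ < Real.exp (-(n * K)) := by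
    intro K hK
    obtain ⟨m, hmK, hm2⟩ := ((hfreq K).and_eventually (eventually_ge_atTop 2)).exists
    have hmK' : K < (1 / m : ℝ) * Real.log (1 / brjunoOmega l m) := by exact_mod_cast hmK
    have hm0 : (0 : ℝ) < m := by exact_mod_cast (by omega : 0 < m)
    set S := (fun k : ℕ => ‖l ^ k - l‖) '' Set.Icc 2 m with hS
    have hSfin : S.Finite := (Set.finite_Icc 2 m).image _
    have hSne : S.Nonempty := ⟨_, ⟨2, ⟨le_refl 2, hm2⟩, rfl⟩⟩
    have hmem : brjunoOmega l m ∈ S := hSne.csInf_mem hSfin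
    obtain ⟨k, hk, hωk⟩ := hmem
    have hω0 : 0 ≤ brjunoOmega l m := Real.sInf_nonneg (by rintro x ⟨j, _, rfl⟩; positivity)
    have hωpos : 0 < brjunoOmega l m := by
      rcases hω0.lt_or_eq with h | h
      · exact h
      · exfalso
        rw [← h] at hmK'
        norm_num at hmK'
        linarith
    have hlog : K * m < Real.log (1 / brjunoOmega l m) := by
      rw [one_div, inv_mul_eq_div] at hmK'
      exact (lt_div_iff₀ hm0).mp hmK'
    have hωlt : brjunoOmega l m < Real.exp (-(m * K)) := by
      rw [one_div, Real.log_inv] at hlog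
      have : Real.log (brjunoOmega l m) < -(m * K) := by linarith
      exact (Real.log_lt_iff_lt_exp hωpos).mp this
    obtain ⟨hk2, hkm⟩ := hk
    obtain ⟨n, rfl⟩ : ∃ n, k = n + 1 := ⟨k - 1, by omega⟩
    have habs' : ‖l ^ n - 1‖ = brjunoOmega l m := by
      simp only [] at hωk
      rw [← hωk, pow_succ, mul_comm (l ^ n) l]
      rw [show l * l ^ n - l = l * (l ^ n - 1) by ring, norm_mul, habs, one_mul]
    refine ⟨n, by omega, ?_⟩
    rw [habs']
    refine lt_of_lt_of_le hωlt (Real.exp_le_exp.mpr ?_)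
    have hnm : (n : ℝ) ≤ m := by exact_mod_cast (by omega : n ≤ m)
    have hn0 : (0 : ℝ) ≤ n := by positivity
    nlinarith
  intro M N
  set s := Finset.Icc 1 (N + 1) with hs
  have hsne : s.Nonempty := ⟨1, by simp [hs]⟩
  set δ := s.inf' hsne (fun j => ‖l ^ j - 1‖) with hδ
  have hδpos : 0 < δ := by
    rw [hδ, Finset.lt_inf'_iff]
    intro j hj
    have hj1 : 1 ≤ j := (Finset.mem_Icc.mp hj).1
    have := sub_ne_zero.mpr (hl j hj1)
    exact norm_pos_iff.mpr this
  set K := max (max M 1) (1 - Real.log δ) with hK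
  have hK1 : 1 ≤ K := le_trans (le_max_right M 1) (le_max_left _ _)
  obtain ⟨n, hn1, hnK⟩ := hsd0 K hK1
  have hnN : N < n := by
    by_contra hcon
    push_neg at hcon
    have hmem : n ∈ s := Finset.mem_Icc.mpr ⟨hn1, by omega⟩
    have hδle : δ ≤ ‖l ^ n - 1‖ := Finset.inf'_le _ hmem
    have h1 : Real.exp (-(n * K)) ≤ Real.exp (-(1 * K)) := by
      refine Real.exp_le_exp.mpr ?_
      have hn1' : (1 : ℝ) ≤ n := by exact_mod_cast hn1
      nlinarith
    have h2 : Real.exp (-(1 * K)) < δ := by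
      rw [one_mul]
      have : -K < Real.log δ := by
        have := le_max_right (max M 1) (1 - Real.log δ)
        have hKle : 1 - Real.log δ ≤ K := this
        linarith
      calc Real.exp (-K) < Real.exp (Real.log δ) := Real.exp_lt_exp.mpr this
        _ = δ := Real.exp_log hδpos
    linarith
  refine ⟨n, by omega, hn1, lt_of_lt_of_le hnK (Real.exp_le_exp.mpr ?_)⟩
  have hMK : M ≤ K := le_trans (le_max_left M 1) (le_max_left _ _)
  have hn0 : (0 : ℝ) ≤ n := by positivity
  nlinarith

lemma phiF_not_summable (l : ℂ) (hl : ∀ n : ℕ, 1 ≤ n → l ^ n ≠ 1)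
    (hsd : ∀ M : ℝ, ∀ N : ℕ, ∃ n : ℕ, N ≤ n ∧ 1 ≤ n ∧
      ‖l ^ n - 1‖ < Real.exp (-(n * M)))
    (z : ℂ) (hz : z ≠ 0) : ¬ Summable (fun n : ℕ => phiF l n * z ^ n) := by
  intro hsum
  have hz0 : 0 < ‖z‖ := norm_pos_iff.mpr hz
  obtain ⟨N, hN⟩ := Metric.tendsto_atTop.mp hsum.tendsto_atTop_zero 1 one_pos
  set M := 1 - Real.log (‖z‖) with hM
  obtain ⟨n, hnN, hn1, hsmall⟩ := hsd M N
  obtain ⟨m, rfl⟩ : ∃ m, n = m + 1 := ⟨n - 1, by omega⟩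
  have hden : 0 < ‖l ^ (m+1) - 1‖ :=
    norm_pos_iff.mpr (sub_ne_zero.mpr (hl (m+1) (by omega)))
  have hexp : (0:ℝ) < Real.exp (-((m+1 : ℕ) * M)) := Real.exp_pos _
  have hphi : Real.exp (((m+1 : ℕ)) * M) / 2 ≤ ‖phiF l (m+1)‖ := by
    rw [phiF_succ, norm_div]
    have h1 : (1:ℝ)/2 / Real.exp (-((m+1 : ℕ) * M)) ≤
        (1:ℝ)/2 / ‖l ^ (m+1) - 1‖ :=
      div_le_div_of_nonneg_left (by norm_num) hden hsmall.le
    have h2 : (1:ℝ)/2 / ‖l ^ (m+1) - 1‖ ≤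
        ‖acF l (m+1) + cConv l (m+1)‖ / ‖l ^ (m+1) - 1‖ :=
      by gcongr; exact numF_lb l m
    have h3 : (1:ℝ)/2 / Real.exp (-((m+1 : ℕ) * M)) = Real.exp (((m+1 : ℕ)) * M) / 2 := by
      rw [Real.exp_neg]
      field_simp
    push_cast at h1 h3 ⊢
    linarith
  have hpow : Real.exp (((m+1 : ℕ)) * M) * ‖z‖ ^ (m+1) = Real.exp ((m+1 : ℕ)) := by
    have hlog : Real.exp (((m+1 : ℕ)) * Real.log (‖z‖)) = ‖z‖ ^ (m+1) := by
      rw [Real.exp_nat_mul, Real.exp_log hz0]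
    rw [hM, mul_sub, Real.exp_sub, mul_one, hlog]
    field_simp
  have hbig : 1 < ‖phiF l (m+1) * z ^ (m+1)‖ := by
    have hnorm : ‖phiF l (m+1) * z ^ (m+1)‖
        = ‖phiF l (m+1)‖ * ‖z‖ ^ (m+1) := by
      simp [norm_mul, norm_pow]
    have hzpow : (0:ℝ) < ‖z‖ ^ (m+1) := by positivity
    have h4 : Real.exp (((m+1 : ℕ))) / 2 ≤ ‖phiF l (m+1)‖ * ‖z‖ ^ (m+1) := by
      calc Real.exp (((m+1 : ℕ))) / 2
          = Real.exp (((m+1 : ℕ)) * M) * ‖z‖ ^ (m+1) / 2 := by rw [hpow]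
        _ = (Real.exp (((m+1 : ℕ)) * M) / 2) * ‖z‖ ^ (m+1) := by ring
        _ ≤ ‖phiF l (m+1)‖ * ‖z‖ ^ (m+1) := by
            exact mul_le_mul_of_nonneg_right hphi hzpow.le
    have h5 : (2:ℝ) < Real.exp (((m+1 : ℕ))) := by
      have := Real.add_one_lt_exp (x := ((m+1 : ℕ) : ℝ)) (by positivity)
      push_cast at this ⊢
      linarith
    rw [hnorm]
    linarith
  have := hN (m+1) (by omega)
  rw [dist_zero_right] at this
  linarith

lemma coeffs_eq_zero {c : ℕ → ℂ} {ρ : ℝ} (hρ : 0 < ρ)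
    (h : ∀ z : ℂ, ‖z‖ < ρ → HasSum (fun n => c n * z ^ n) 0) :
    ∀ n, c n = 0 := by
  have hp : HasFPowerSeriesAt (0 : ℂ → ℂ) (FormalMultilinearSeries.ofScalars ℂ c) 0 := by
    rw [hasFPowerSeriesAt_iff]
    filter_upwards [Metric.ball_mem_nhds (0:ℂ) hρ] with z hz
    have hz' : ‖z‖ < ρ := by
      simpa [Complex.dist_eq] using hz
    have := h z hz'
    have hcoeff : ∀ n, (FormalMultilinearSeries.ofScalars ℂ c).coeff n = c n := by
      intro n
      simp [FormalMultilinearSeries.coeff, FormalMultilinearSeries.ofScalars, Pi.one_def, List.ofFn_const]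
    simp only [hcoeff, Pi.zero_apply, zero_add, smul_eq_mul]
    convert this using 2 with n
    · rfl
    · ring
  have := hp.eq_zero
  intro n
  have h2 := (FormalMultilinearSeries.ofScalars_series_eq_zero (𝕜 := ℂ) (E := ℂ)).mp this
  exact congrFun h2 n

lemma partD (l : ℂ) (habs : ‖l‖ = 1) (ac : ℕ → ℂ)
    (hac : ∀ n, ‖ac n‖ ≤ 1)
    (hdiv : ∀ φ : PowerSeries ℂ, PowerSeries.constantCoeff φ = 0 →
        PowerSeries.rescale l φ = φ + PowerSeries.mk ac + φ ^ 2 →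
        ∀ z : ℂ, z ≠ 0 → ¬ Summable (fun n : ℕ => PowerSeries.coeff n φ * z ^ n)) :
    ¬ ∃ r > 0, ∃ φf : ℂ → ℂ, DifferentiableOn ℂ φf (Metric.ball 0 r) ∧ φf 0 = 0 ∧
        ∀ z ∈ Metric.ball (0 : ℂ) r,
          φf (l * z) = φf z + (∑' n : ℕ, ac n * z ^ n) + φf z ^ 2 := by
  rintro ⟨r, hr, φf, hdiff, hφ0, heq⟩
  have hanal : AnalyticAt ℂ φf 0 := hdiff.analyticAt (Metric.ball_mem_nhds _ hr)
  obtain ⟨p, hp⟩ := hanal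
  rw [hasFPowerSeriesAt_iff] at hp
  obtain ⟨δ0, hδ0pos, hδ0⟩ := Metric.eventually_nhds_iff.mp hp
  set b := fun n => p.coeff n with hb
  set δ := min δ0 (min r 1) with hδ
  have hδpos : 0 < δ := lt_min hδ0pos (lt_min hr one_pos)
  have hδr : δ ≤ r := le_trans (min_le_right _ _) (min_le_left _ _)
  have hδ1 : δ ≤ 1 := le_trans (min_le_right _ _) (min_le_right _ _)
  have hsum : ∀ z : ℂ, ‖z‖ < δ → HasSum (fun n => b n * z ^ n) (φf z) := by
    intro z hz
    have hz0 : dist z 0 < δ0 := by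
      rw [Complex.dist_eq, sub_zero]
      exact lt_of_lt_of_le hz (min_le_left _ _)
    have := hδ0 hz0
    rw [zero_add] at this
    have hfun : (fun n => z ^ n • p.coeff n) = fun n => b n * z ^ n := by
      funext n; rw [smul_eq_mul, hb, mul_comm]
    rwa [hfun] at this
  -- geometric bound on coefficients
  have hδ2 : ‖((δ/2 : ℝ) : ℂ)‖ < δ := by
    rw [Complex.norm_real, Real.norm_eq_abs, abs_of_pos (by linarith)]
    linarith
  have hsum0 := (hsum _ hδ2).summable
  obtain ⟨C, hC⟩ := hsum0.tendsto_atTop_zero.norm.bddAbove_range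
  have hCb : ∀ n : ℕ, ‖b n‖ * (δ/2) ^ n ≤ C := by
    intro n
    have h1 : ‖b n * ((δ/2 : ℝ) : ℂ) ^ n‖ ≤ C := hC ⟨n, rfl⟩
    rwa [norm_mul, norm_pow, Complex.norm_real, Real.norm_eq_abs,
      abs_of_pos (by linarith)] at h1
  set ρ := δ / 4 with hρdef
  have hρpos : 0 < ρ := by positivity
  have hρδ : ρ < δ := by rw [hρdef]; linarith
  have hnorm : ∀ z : ℂ, ‖z‖ < ρ → Summable (fun n => ‖b n * z ^ n‖) := by
    intro z hz
    refine Summable.of_nonneg_of_le (f := fun n : ℕ => C * (1/2:ℝ) ^ n)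
      (fun n => norm_nonneg _) (fun n => ?_)
      ((summable_geometric_of_lt_one (by norm_num) (by norm_num)).mul_left C)
    rw [norm_mul, norm_pow]
    calc ‖b n‖ * ‖z‖ ^ n ≤ ‖b n‖ * ((δ/2) * (1/2)) ^ n := by
          refine mul_le_mul_of_nonneg_left (pow_le_pow_left₀ (norm_nonneg _) ?_ n) (norm_nonneg _)
          rw [hρdef] at hz; linarith
      _ = (‖b n‖ * (δ/2) ^ n) * (1/2) ^ n := by rw [mul_pow]; ring
      _ ≤ C * (1/2) ^ n := by
          refine mul_le_mul_of_nonneg_right (hCb n) (by positivity)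
  -- the coefficient identity
  set cc := fun n : ℕ => l ^ n * b n - b n - ac n -
    ∑ kl ∈ Finset.HasAntidiagonal.antidiagonal n, b kl.1 * b kl.2 with hccdef
  have hcc : ∀ n, cc n = 0 := by
    refine coeffs_eq_zero hρpos (fun z hz => ?_)
    have hzδ : ‖z‖ < δ := lt_trans hz hρδ
    have hzr : z ∈ Metric.ball (0:ℂ) r := by
      rw [Metric.mem_ball, Complex.dist_eq, sub_zero]
      exact lt_of_lt_of_le hzδ hδr
    have h1 := hsum z hzδ
    have h2 : HasSum (fun n => b n * (l * z) ^ n) (φf (l * z)) := by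
      refine hsum _ ?_
      rw [norm_mul, habs, one_mul]; exact hzδ
    have hacs : Summable (fun n => ‖ac n * z ^ n‖) := by
      refine Summable.of_nonneg_of_le (f := fun n : ℕ => (1:ℝ) * ‖z‖ ^ n)
        (fun n => norm_nonneg _) (fun n => ?_)
        ((summable_geometric_of_lt_one (norm_nonneg _)
          (lt_of_lt_of_le (lt_trans hz hρδ) hδ1)).mul_left 1)
      show ‖ac n * z ^ n‖ ≤ 1 * ‖z‖ ^ n
      rw [norm_mul, norm_pow]
      exact mul_le_mul_of_nonneg_right (hac n) (by positivity)
    have h3 : HasSum (fun n => ac n * z ^ n) (∑' n, ac n * z ^ n) :=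
      (hacs.of_norm).hasSum
    -- Cauchy product
    have hprod := tsum_mul_tsum_eq_tsum_sum_antidiagonal_of_summable_norm
      (f := fun n => b n * z ^ n) (g := fun n => b n * z ^ n) (hnorm z hz) (hnorm z hz)
    have hs4 : Summable (fun n => ∑ kl ∈ Finset.HasAntidiagonal.antidiagonal n,
        (b kl.1 * z ^ kl.1) * (b kl.2 * z ^ kl.2)) :=
      (summable_norm_sum_mul_antidiagonal_of_summable_norm (hnorm z hz) (hnorm z hz)).of_norm
    have h4 : HasSum (fun n => ∑ kl ∈ Finset.HasAntidiagonal.antidiagonal n,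
        (b kl.1 * z ^ kl.1) * (b kl.2 * z ^ kl.2)) (φf z * φf z) := by
      have := hs4.hasSum
      rwa [← hprod, h1.tsum_eq] at this
    have heqz := heq z hzr
    have hcomb := ((h2.sub h1).sub h3).sub h4
    have hval : φf (l * z) - φf z - (∑' n, ac n * z ^ n) - φf z * φf z = 0 := by
      rw [heqz]; ring
    rw [hval] at hcomb
    have hfun : (fun n => b n * (l * z) ^ n - b n * z ^ n - ac n * z ^ n -
        ∑ kl ∈ Finset.HasAntidiagonal.antidiagonal n, (b kl.1 * z ^ kl.1) * (b kl.2 * z ^ kl.2))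
        = fun n => cc n * z ^ n := by
      funext n
      have hinner : ∑ kl ∈ Finset.HasAntidiagonal.antidiagonal n, (b kl.1 * z ^ kl.1) * (b kl.2 * z ^ kl.2)
          = (∑ kl ∈ Finset.HasAntidiagonal.antidiagonal n, b kl.1 * b kl.2) * z ^ n := by
        rw [Finset.sum_mul]
        refine Finset.sum_congr rfl (fun kl hkl => ?_)
        rw [← Finset.HasAntidiagonal.mem_antidiagonal.mp hkl]
        ring
      rw [hinner, hccdef, mul_pow]
      ring
    rwa [hfun] at hcomb
  -- build the formal power series solution
  set ψ := PowerSeries.mk b with hψ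
  have hψ0 : PowerSeries.constantCoeff ψ = 0 := by
    have h0 : HasSum (fun n => b n * (0:ℂ) ^ n) (φf 0) := hsum 0 (by simpa using hδpos)
    have h0' : HasSum (fun n => b n * (0:ℂ) ^ n) (b 0) := by
      have := hasSum_single (f := fun n => b n * (0:ℂ) ^ n) 0
        (fun m hm => by simp [zero_pow hm])
      simpa using this
    have : b 0 = φf 0 := h0'.unique h0
    rw [← PowerSeries.coeff_zero_eq_constantCoeff_apply, hψ, PowerSeries.coeff_mk, this, hφ0]
  have hψeq : PowerSeries.rescale l ψ = ψ + PowerSeries.mk ac + ψ ^ 2 := by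
    ext n
    rw [PowerSeries.coeff_rescale, map_add, map_add, PowerSeries.coeff_mk,
      PowerSeries.coeff_mk, sq, PowerSeries.coeff_mul]
    have hccn := hcc n
    rw [hccdef] at hccn
    simp only [hψ, PowerSeries.coeff_mk]
    linear_combination hccn
  have hcontra := hdiv ψ hψ0 hψeq ((ρ/2 : ℝ) : ℂ)
    (by simp; positivity)
  refine hcontra ?_
  have : ‖((ρ/2 : ℝ) : ℂ)‖ < ρ := by
    rw [Complex.norm_real, Real.norm_eq_abs, abs_of_pos (by linarith)]; linarith
  have := (hnorm _ this).of_norm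
  simpa [hψ, PowerSeries.coeff_mk] using this

/-- for a Cremer number `λ` there is a holomorphic function
`a(z) = Σ ac_n z^n` on the unit disk with `a(0) = 0` such that
`F(z,w) = (λz, w + a(z) + w²)` admits no holomorphic invariant curve `{w = φ(z)}`
near `z = 0`: the unique formal solution of `φ(λz) = φ(z) + a(z) + φ(z)²` with
`φ(0) = 0` diverges. -/
theorem cremer_skew_product_without_invariant_curve
    (l : ℂ) (habs : ‖l‖ = 1)
    (hC : Filter.limsup
        (fun m : ℕ => (((1 / m : ℝ) * Real.log (1 / brjunoOmega l m) : ℝ) : EReal))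
        Filter.atTop = ⊤) :
    ∃ ac : ℕ → ℂ, ac 0 = 0 ∧
      (∀ z ∈ Metric.ball (0 : ℂ) 1, Summable fun n : ℕ => ac n * z ^ n) ∧
      (∀ φ : PowerSeries ℂ, PowerSeries.constantCoeff φ = 0 →
        PowerSeries.rescale l φ = φ + PowerSeries.mk ac + φ ^ 2 →
        ∀ z : ℂ, z ≠ 0 → ¬ Summable (fun n : ℕ => PowerSeries.coeff n φ * z ^ n)) ∧
      ¬ ∃ r > 0, ∃ φf : ℂ → ℂ, DifferentiableOn ℂ φf (Metric.ball 0 r) ∧ φf 0 = 0 ∧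
        ∀ z ∈ Metric.ball (0 : ℂ) r,
          φf (l * z) = φf z + (∑' n : ℕ, ac n * z ^ n) + φf z ^ 2 := by
  have hl := not_root_of_unity l hC
  have hsd := small_divisors l habs hC
  have hac : ∀ n, ‖acF l n‖ ≤ 1 := acF_abs_le l
  have hdiv : ∀ φ : PowerSeries ℂ, PowerSeries.constantCoeff φ = 0 →
      PowerSeries.rescale l φ = φ + PowerSeries.mk (acF l) + φ ^ 2 →
      ∀ z : ℂ, z ≠ 0 → ¬ Summable (fun n : ℕ => PowerSeries.coeff n φ * z ^ n) := by
    intro φ h0 heqφ z hz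
    have hco := formal_unique l hl φ h0 heqφ
    have hfun : (fun n : ℕ => PowerSeries.coeff n φ * z ^ n)
        = fun n : ℕ => phiF l n * z ^ n := funext fun n => by rw [hco n]
    rw [hfun]
    exact phiF_not_summable l hl hsd z hz
  refine ⟨acF l, acF_zero l, ?_, hdiv, partD l habs (acF l) hac hdiv⟩
  intro z hzball
  have hz1 : ‖z‖ < 1 := by
    simpa [Complex.dist_eq] using Metric.mem_ball.mp hzball
  refine Summable.of_norm ?_
  refine Summable.of_nonneg_of_le (f := fun n : ℕ => (1:ℝ) * ‖z‖ ^ n)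
    (fun n => norm_nonneg _) (fun n => ?_)
    ((summable_geometric_of_lt_one (norm_nonneg _) hz1).mul_left 1)
  show ‖acF l n * z ^ n‖ ≤ 1 * ‖z‖ ^ n
  rw [norm_mul, norm_pow]
  exact mul_le_mul_of_nonneg_right (hac n) (by positivity)
end

section
/- Let λ ∈ ℂ, λ not a root of unity, and let a(z) = Σ_{n≥1} a_n z^n be a formal power series with a(0) = 0. Then there is a unique formal power series φ(z) = Σ_{n≥0} φ_n z^n with φ₀ = 0 satisfying φ(λz) = φ(z) + a(z) + φ(z)², and its coefficients satisfy φ₁ = a₁/(λ−1) and φ_n = (λ^n − 1)^{-1}(a_n + Σ_{j=1}^{n−1} φ_j φ_{n−j}) for n ≥ 2. -/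
open PowerSeries Finset

/-- The recursively defined coefficients of the solution. -/
noncomputable def fcqCoeff (l : ℂ) (a : PowerSeries ℂ) : ℕ → ℂ
  | 0 => 0
  | n + 1 => (l ^ (n + 1) - 1)⁻¹ * (PowerSeries.coeff (n + 1) a +
      ∑ j ∈ (Finset.Icc 1 n).attach, fcqCoeff l a j.1 * fcqCoeff l a (n + 1 - j.1))
  decreasing_by
  all_goals (have := Finset.mem_Icc.mp j.2; omega)

lemma fcq_sq_coeff (ψ : PowerSeries ℂ) (h0 : PowerSeries.constantCoeff ψ = 0) (n : ℕ) :
    PowerSeries.coeff n (ψ ^ 2) =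
      ∑ j ∈ Finset.Icc 1 (n - 1), PowerSeries.coeff j ψ * PowerSeries.coeff (n - j) ψ := by
  rw [sq, PowerSeries.coeff_mul, Finset.Nat.sum_antidiagonal_eq_sum_range_succ_mk]
  rcases Nat.eq_zero_or_pos n with rfl | hn
  · simp [PowerSeries.coeff_zero_eq_constantCoeff, h0]
  · symm
    apply Finset.sum_subset
    · intro x hx
      have := Finset.mem_Icc.mp hx
      simp only [Finset.mem_range]
      omega
    · intro x hx hx'
      simp only [Finset.mem_range] at hx
      simp only [Finset.mem_Icc, not_and, not_le] at hx'
      have hx0 : x = 0 ∨ x = n := by omega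
      rcases hx0 with rfl | rfl
      · simp [PowerSeries.coeff_zero_eq_constantCoeff, h0]
      · simp [PowerSeries.coeff_zero_eq_constantCoeff, h0]

/-- Characterization of solutions coefficientwise. -/
lemma fcq_iff (l : ℂ) (a ψ : PowerSeries ℂ) (h0 : PowerSeries.constantCoeff ψ = 0) :
    PowerSeries.rescale l ψ = ψ + a + ψ ^ 2 ↔
      ∀ n : ℕ, (l ^ n - 1) * PowerSeries.coeff n ψ = PowerSeries.coeff n a +
        ∑ j ∈ Finset.Icc 1 (n - 1),
          PowerSeries.coeff j ψ * PowerSeries.coeff (n - j) ψ := by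
  constructor
  · intro h n
    have := congrArg (PowerSeries.coeff n) h
    rw [PowerSeries.coeff_rescale] at this
    simp only [map_add] at this
    rw [fcq_sq_coeff ψ h0 n] at this
    ring_nf
    ring_nf at this
    linear_combination this
  · intro h
    ext n
    have := h n
    rw [PowerSeries.coeff_rescale]
    simp only [map_add]
    rw [fcq_sq_coeff ψ h0 n]
    linear_combination this

/-- for `λ` not a root of unity and a formal power series `a` with
`a(0) = 0`, there is a unique formal power series `φ` with `φ₀ = 0` satisfying
`φ(λz) = φ(z) + a(z) + φ(z)²`, and its coefficients satisfy `φ₁ = a₁/(λ−1)` and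
`φ_n = (λ^n − 1)⁻¹(a_n + Σ_{j=1}^{n−1} φ_j φ_{n−j})` for `n ≥ 2`. -/
theorem formal_invariant_curve_quadratic_unique
    (l : ℂ) (hroot : ∀ n : ℕ, 1 ≤ n → l ^ n ≠ 1) (a : PowerSeries ℂ)
    (ha : PowerSeries.constantCoeff a = 0) :
    (∃! φ : PowerSeries ℂ, PowerSeries.constantCoeff φ = 0 ∧
        PowerSeries.rescale l φ = φ + a + φ ^ 2) ∧
      ∀ φ : PowerSeries ℂ, PowerSeries.constantCoeff φ = 0 →
        PowerSeries.rescale l φ = φ + a + φ ^ 2 →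
        PowerSeries.coeff 1 φ = PowerSeries.coeff 1 a / (l - 1) ∧
          ∀ n : ℕ, 2 ≤ n →
            PowerSeries.coeff n φ =
              (l ^ n - 1)⁻¹ * (PowerSeries.coeff n a +
                ∑ j ∈ Finset.Icc 1 (n - 1),
                  PowerSeries.coeff j φ * PowerSeries.coeff (n - j) φ) := by
  have hne : ∀ n : ℕ, 1 ≤ n → l ^ n - 1 ≠ 0 := fun n hn => sub_ne_zero.mpr (hroot n hn)
  -- key recursion fact for any solution
  have key : ∀ φ : PowerSeries ℂ, PowerSeries.constantCoeff φ = 0 →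
      PowerSeries.rescale l φ = φ + a + φ ^ 2 →
      ∀ n : ℕ, 1 ≤ n → PowerSeries.coeff n φ =
        (l ^ n - 1)⁻¹ * (PowerSeries.coeff n a +
          ∑ j ∈ Finset.Icc 1 (n - 1),
            PowerSeries.coeff j φ * PowerSeries.coeff (n - j) φ) := by
    intro φ h0 heq n hn
    have h := (fcq_iff l a φ h0).mp heq n
    rw [eq_inv_mul_iff_mul_eq₀ (hne n hn)]
    exact h
  constructor
  · -- existence and uniqueness
    set φ₀ : PowerSeries ℂ := PowerSeries.mk (fcqCoeff l a) with hφ₀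
    have hc0 : PowerSeries.constantCoeff φ₀ = 0 := by
      rw [← PowerSeries.coeff_zero_eq_constantCoeff]
      simp [hφ₀, fcqCoeff]
    have hsol : PowerSeries.rescale l φ₀ = φ₀ + a + φ₀ ^ 2 := by
      rw [fcq_iff l a φ₀ hc0]
      intro n
      rcases n with _ | m
      · simp [hc0, ha]
      · simp only [hφ₀, PowerSeries.coeff_mk]
        rw [fcqCoeff]
        rw [← mul_assoc, mul_inv_cancel₀ (hne (m+1) (by omega)), one_mul]
        congr 1
        rw [Finset.sum_attach (Finset.Icc 1 m) (fun j => fcqCoeff l a j * fcqCoeff l a (m + 1 - j))]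
        simp
    refine ⟨φ₀, ⟨hc0, hsol⟩, ?_⟩
    rintro ψ ⟨hψ0, hψ⟩
    ext n
    induction n using Nat.strong_induction_on with
    | _ n ih =>
      rcases Nat.eq_zero_or_pos n with rfl | hn
      · simp [hψ0, hc0]
      · rw [key ψ hψ0 hψ n hn, key φ₀ hc0 hsol n hn]
        congr 1
        congr 1
        apply Finset.sum_congr rfl
        intro j hj
        have hj' := Finset.mem_Icc.mp hj
        rw [ih j (by omega), ih (n - j) (by omega)]
  · intro φ h0 heq
    refine ⟨?_, fun n hn => key φ h0 heq n (by omega)⟩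
    have := key φ h0 heq 1 le_rfl
    simp at this
    rw [this, div_eq_inv_mul]
end
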